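/- Let ψ ∈ C¹([0,∞);[0,∞)) and set Φ(v) := ψ(|v|²); assume C_Φ := ∫ e^{-Φ} dv < ∞ and 0 < ∫_{ℝ^d} |∇Φ(v)|² μ₂(dv) < ∞. Let U : ℝ^d → [0,∞) be measurable with C_U := ∫ e^{-U} dx < ∞ and suppose μ₁ satisfies the Poincaré inequality with constant c₁ > 0: for every h ∈ C¹_b(ℝ^d), ∫ h² dμ₁ − (∫ h dμ₁)² ≤ c₁ ∫ |∇h|² dμ₁. Then for every g ∈ C¹_b(ℝ^d) with ∫ g dμ₁ = 0: ∫_{ℝ^d} g(x)² μ₁(dx) ≤ ( c₁ d / ∫_{ℝ^d} |∇Φ|² dμ₂ ) ∫_{ℝ^d} ∫_{ℝ^d} ⟨∇Φ(v), ∇g(x)⟩² μ₂(dv) μ₁(dx). (Macroscopic coercivity for the kinetic transport operator.) -/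

import Mathlib

open MeasureTheory Real Filter Topology Set
open scoped RealInnerProductSpace NNReal ENNReal

noncomputable section

/-- `d`-dimensional Euclidean space. -/
abbrev E (d : ℕ) : Type := EuclideanSpace ℝ (Fin d)

/-- The probability measure `μ₁` with density proportional to `e^{-U}`. -/
def mu1 (d : ℕ) (U : E d → ℝ) : Measure (E d) :=
  volume.withDensity fun x =>
    ENNReal.ofReal (Real.exp (-(U x)) / ∫ y : E d, Real.exp (-(U y)))

/-- The probability measure `μ₂` with density proportional to `e^{-Φ}`. -/
def mu2 (d : ℕ) (Φ : E d → ℝ) : Measure (E d) :=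
  volume.withDensity fun v =>
    ENNReal.ofReal (Real.exp (-(Φ v)) / ∫ w : E d, Real.exp (-(Φ w)))

lemma grad_radial {d : ℕ} (ψ : ℝ → ℝ) (hψ : ContDiffOn ℝ 1 ψ (Ici 0))
    (Φ : E d → ℝ) (hΦdef : ∀ v, Φ v = ψ (‖v‖ ^ 2)) (v : E d) :
    gradient Φ v = (2 * derivWithin ψ (Ici 0) (‖v‖ ^ 2)) • v := by
  have hΦ : Φ = fun w => ψ (‖w‖ ^ 2) := funext hΦdef
  subst hΦ
  set a := derivWithin ψ (Ici 0) (‖v‖ ^ 2) with ha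
  have hq : HasFDerivAt (fun w : E d => ‖w‖ ^ 2) (2 • (innerSL ℝ v)) v := by
    simpa using (hasFDerivAt_id v).norm_sq
  have hψd : HasDerivWithinAt ψ a (Ici 0) (‖v‖ ^ 2) :=
    (hψ.differentiableOn one_ne_zero (‖v‖ ^ 2) (mem_Ici.mpr (by positivity))).hasDerivWithinAt
  have comp : HasFDerivWithinAt (fun w : E d => ψ (‖w‖ ^ 2))
      ((ContinuousLinearMap.smulRight (1 : ℝ →L[ℝ] ℝ) a).comp (2 • innerSL ℝ v)) univ v := by
    refine HasFDerivWithinAt.comp v hψd.hasFDerivWithinAt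
      (hq.hasFDerivWithinAt) (fun w _ => mem_Ici.mpr (by positivity))
  have hF : HasFDerivAt (fun w : E d => ψ (‖w‖ ^ 2))
      ((ContinuousLinearMap.smulRight (1 : ℝ →L[ℝ] ℝ) a).comp (2 • innerSL ℝ v)) v :=
    hasFDerivWithinAt_univ.mp comp
  have hG : HasGradientAt (fun w : E d => ψ (‖w‖ ^ 2)) ((2 * a) • v) v := by
    rw [hasGradientAt_iff_hasFDerivAt]
    refine hF.congr_fderiv ?_
    ext w
    simp only [InnerProductSpace.toDual_apply_apply, ContinuousLinearMap.coe_comp', Function.comp_apply,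
      ContinuousLinearMap.smul_apply, innerSL_apply_apply, ContinuousLinearMap.smulRight_apply,
      ContinuousLinearMap.one_apply, real_inner_smul_left, smul_eq_mul]
    ring
  exact hG.gradient

lemma mu2_subst {d : ℕ} (Φ : E d → ℝ) (hΦc : Continuous Φ)
    (R : E d ≃ₗᵢ[ℝ] E d) (hΦinv : ∀ v, Φ (R v) = Φ v) (f : E d → ℝ) :
    ∫ v, f (R v) ∂(mu2 d Φ) = ∫ v, f v ∂(mu2 d Φ) := by
  set C := ∫ w : E d, Real.exp (-(Φ w)) with hC
  set ρ : E d → ℝ≥0 := fun v => Real.toNNReal (Real.exp (-(Φ v)) / C) with hρ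
  have hmeas : Measurable ρ :=
    (continuous_real_toNNReal.comp ((Real.continuous_exp.comp hΦc.neg).div_const C)).measurable
  have hmu : mu2 d Φ = volume.withDensity fun v => ((ρ v : ℝ≥0) : ℝ≥0∞) := by simp only [mu2, ENNReal.ofReal]; rfl
  rw [hmu, integral_withDensity_eq_integral_smul hmeas,
    integral_withDensity_eq_integral_smul hmeas]
  have := (R.measurePreserving).integral_comp
    (R.toHomeomorph.measurableEmbedding) (fun v => ρ v • f v)
  rw [← this]
  refine integral_congr_ae (Eventually.of_forall fun v => ?_)
  simp only [hρ, hΦinv v]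

lemma key {d : ℕ} (hd : 0 < d) (ψ : ℝ → ℝ) (hψ : ContDiffOn ℝ 1 ψ (Ici 0))
    (Φ : E d → ℝ) (hΦdef : ∀ v, Φ v = ψ (‖v‖ ^ 2))
    (hΦmom : Integrable (fun v : E d => ‖gradient Φ v‖ ^ 2) (mu2 d Φ))
    (u : E d) :
    ∫ v, ⟪gradient Φ v, u⟫ ^ 2 ∂(mu2 d Φ)
      = ((∫ v, ‖gradient Φ v‖ ^ 2 ∂(mu2 d Φ)) / d) * ‖u‖ ^ 2 := by
  set μ := mu2 d Φ with hμ
  set I := ∫ v, ‖gradient Φ v‖ ^ 2 ∂μ with hI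
  -- continuity facts
  have hψc : ContinuousOn ψ (Ici 0) := hψ.continuousOn
  have hnsq : Continuous fun v : E d => ‖v‖ ^ 2 := continuous_norm.pow 2
  have hmem : ∀ v : E d, ‖v‖ ^ 2 ∈ Ici (0:ℝ) := fun v => mem_Ici.mpr (by positivity)
  have hΦc : Continuous Φ := by
    have : Continuous fun v : E d => ψ (‖v‖ ^ 2) := hψc.comp_continuous hnsq hmem
    simpa [funext hΦdef] using this
  have hcc : Continuous fun v : E d => 2 * derivWithin ψ (Ici 0) (‖v‖ ^ 2) :=
    continuous_const.mul
      ((hψ.continuousOn_derivWithin (uniqueDiffOn_Ici 0) le_rfl).comp_continuous hnsq hmem)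
  have hgrad : ∀ v, gradient Φ v = (2 * derivWithin ψ (Ici 0) (‖v‖ ^ 2)) • v :=
    grad_radial ψ hψ Φ hΦdef
  have hgc : Continuous fun v : E d => gradient Φ v := by
    simp only [funext hgrad]
    exact hcc.smul continuous_id
  -- gradient commutes with isometries
  have hgradR : ∀ (R : E d ≃ₗᵢ[ℝ] E d) (v : E d),
      gradient Φ (R v) = R (gradient Φ v) := by
    intro R v
    rw [hgrad, hgrad, R.norm_map, LinearIsometryEquiv.map_smul]
  have hΦinv : ∀ (R : E d ≃ₗᵢ[ℝ] E d) (v : E d), Φ (R v) = Φ v := by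
    intro R v; rw [hΦdef, hΦdef, R.norm_map]
  -- basis vectors
  set Eu : Fin d → E d := fun i => EuclideanSpace.single i (1:ℝ) with hEu
  have hEunorm : ∀ i, ‖Eu i‖ = 1 := by
    intro i; simp [hEu, EuclideanSpace.norm_single]
  have hinnerEu : ∀ (x : E d) i, ⟪x, Eu i⟫ = x i := by
    intro x i; simp [hEu, EuclideanSpace.inner_single_right]
  -- integrability
  have hint : ∀ i j : Fin d,
      Integrable (fun v => ⟪gradient Φ v, Eu i⟫ * ⟪gradient Φ v, Eu j⟫) μ := by
    intro i j
    refine hΦmom.mono ((Continuous.inner hgc continuous_const).mul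
      (Continuous.inner hgc continuous_const)).aestronglyMeasurable
      (Eventually.of_forall fun v => ?_)
    have h1 := abs_real_inner_le_norm (gradient Φ v) (Eu i)
    have h2 := abs_real_inner_le_norm (gradient Φ v) (Eu j)
    rw [hEunorm, mul_one] at h1 h2
    have : |⟪gradient Φ v, Eu i⟫ * ⟪gradient Φ v, Eu j⟫| ≤ ‖gradient Φ v‖ ^ 2 := by
      rw [abs_mul, sq]
      exact mul_le_mul h1 h2 (abs_nonneg _) (norm_nonneg _)
    rw [Real.norm_eq_abs, Real.norm_eq_abs, abs_of_nonneg (sq_nonneg ‖gradient Φ v‖)]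
    exact this
  set B : Fin d → Fin d → ℝ :=
    fun i j => ∫ v, ⟪gradient Φ v, Eu i⟫ * ⟪gradient Φ v, Eu j⟫ ∂μ with hB
  -- off-diagonal terms vanish
  have hoff : ∀ i j : Fin d, i ≠ j → B i j = 0 := by
    intro i j hij
    set R : E d ≃ₗᵢ[ℝ] E d := LinearIsometryEquiv.piLpCongrRight 2
      (fun k => if k = j then LinearIsometryEquiv.neg ℝ else LinearIsometryEquiv.refl ℝ ℝ) with hR
    have hRapp : ∀ (v : E d) (k : Fin d), R v k = if k = j then -(v k) else v k := by
      intro v k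
      simp only [hR, LinearIsometryEquiv.piLpCongrRight_apply]
      by_cases h : k = j
      · subst h; simp
      · simp [h]
    have hRi : R (Eu i) = Eu i := by
      ext k; rw [hRapp]
      by_cases h : k = j
      · subst h; simp [hEu, EuclideanSpace.single_apply, Ne.symm hij]
      · simp [h]
    have hRj : R (Eu j) = -(Eu j) := by
      ext k; rw [hRapp]
      by_cases h : k = j
      · subst h; simp
      · simp [hEu, EuclideanSpace.single_apply, h]
    have step := mu2_subst Φ hΦc R (hΦinv R)
      (fun v => ⟪gradient Φ v, Eu i⟫ * ⟪gradient Φ v, Eu j⟫)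
    have congr1 : ∀ v : E d,
        ⟪gradient Φ (R v), Eu i⟫ * ⟪gradient Φ (R v), Eu j⟫
          = -(⟪gradient Φ v, Eu i⟫ * ⟪gradient Φ v, Eu j⟫) := by
      intro v
      rw [hgradR R v]
      have e1 : ⟪R (gradient Φ v), Eu i⟫ = ⟪gradient Φ v, Eu i⟫ := by
        conv_lhs => rw [← hRi]
        exact R.inner_map_map _ _
      have e2 : ⟪R (gradient Φ v), Eu j⟫ = -⟪gradient Φ v, Eu j⟫ := by
        have : ⟪R (gradient Φ v), R (Eu j)⟫ = ⟪gradient Φ v, Eu j⟫ := R.inner_map_map _ _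
        rw [hRj] at this
        rw [← this, inner_neg_right]; ring
      rw [e1, e2]; ring
    have : B i j = - B i j := by
      calc B i j = ∫ v, ⟪gradient Φ (R v), Eu i⟫ * ⟪gradient Φ (R v), Eu j⟫ ∂μ := by
            rw [hμ]; rw [step]
        _ = ∫ v, -(⟪gradient Φ v, Eu i⟫ * ⟪gradient Φ v, Eu j⟫) ∂μ := by
            exact integral_congr_ae (Eventually.of_forall fun v => congr1 v)
        _ = - B i j := by rw [integral_neg]
    linarith
  -- diagonal terms are all equal
  have hdiagEq : ∀ i j : Fin d, B i i = B j j := by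
    intro i j
    set S : E d ≃ₗᵢ[ℝ] E d := LinearIsometryEquiv.piLpCongrLeft 2 ℝ ℝ (Equiv.swap i j) with hS
    have hSapp : ∀ (x : E d) (k : Fin d), S x k = x (Equiv.swap i j k) := by
      intro x k
      simp [hS, LinearIsometryEquiv.piLpCongrLeft_apply, Equiv.piCongrLeft',
        Equiv.symm_swap]
    have hSi : S (Eu i) = Eu j := by
      ext k; rw [hSapp]
      rcases eq_or_ne k j with h | h
      · subst h
        simp [hEu, EuclideanSpace.single_apply, Equiv.swap_apply_right]
      · rcases eq_or_ne k i with h2 | h2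
        · subst h2
          simp [hEu, EuclideanSpace.single_apply, Equiv.swap_apply_left, h, Ne.symm h]
        · rw [Equiv.swap_apply_of_ne_of_ne h2 h]
          simp [hEu, EuclideanSpace.single_apply, h, h2]
    have step := mu2_subst Φ hΦc S (hΦinv S)
      (fun v => ⟪gradient Φ v, Eu j⟫ * ⟪gradient Φ v, Eu j⟫)
    have congr1 : ∀ v : E d,
        ⟪gradient Φ (S v), Eu j⟫ * ⟪gradient Φ (S v), Eu j⟫
          = ⟪gradient Φ v, Eu i⟫ * ⟪gradient Φ v, Eu i⟫ := by
      intro v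
      rw [hgradR S v, ← hSi, S.inner_map_map]
    calc B i i = ∫ v, ⟪gradient Φ (S v), Eu j⟫ * ⟪gradient Φ (S v), Eu j⟫ ∂μ := by
          exact (integral_congr_ae (Eventually.of_forall fun v => (congr1 v).symm))
      _ = B j j := by rw [hμ]; rw [step]
  -- the diagonal sums to I
  have hsum : ∑ i : Fin d, B i i = I := by
    rw [hB, ← integral_finset_sum _ (fun i _ => hint i i), hI]
    refine integral_congr_ae (Eventually.of_forall fun v => ?_)
    have : ∀ x : E d, ∑ i : Fin d, ⟪x, Eu i⟫ * ⟪x, Eu i⟫ = ‖x‖ ^ 2 := by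
      intro x
      simp only [hinnerEu]
      rw [EuclideanSpace.norm_eq]
      rw [Real.sq_sqrt (by positivity)]
      exact Finset.sum_congr rfl fun i _ => by simp [Real.norm_eq_abs, sq, abs_mul_abs_self]
    exact this _
  have hdiag : ∀ i : Fin d, B i i = I / d := by
    intro i
    have : ∑ j : Fin d, B j j = d * B i i := by
      rw [Finset.sum_congr rfl fun j _ => hdiagEq j i]
      simp [Finset.sum_const, Finset.card_univ, nsmul_eq_mul]
    rw [hsum] at this
    have hd' : (d : ℝ) ≠ 0 := Nat.cast_ne_zero.mpr hd.ne'
    rw [this, mul_div_cancel_left₀ _ hd']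
  -- expand the integrand
  have expand : ∀ x : E d, ⟪x, u⟫ ^ 2
      = ∑ i : Fin d, ∑ j : Fin d,
          (u i * u j) * (⟪x, Eu i⟫ * ⟪x, Eu j⟫) := by
    intro x
    have hxu : ⟪x, u⟫ = ∑ i : Fin d, u i * ⟪x, Eu i⟫ := by
      simp only [hinnerEu]
      rw [PiLp.inner_apply]
      exact Finset.sum_congr rfl fun i _ => by simp [mul_comm]
    rw [sq, hxu, Finset.sum_mul_sum]
    exact Finset.sum_congr rfl fun i _ => Finset.sum_congr rfl fun j _ => by ring
  calc ∫ v, ⟪gradient Φ v, u⟫ ^ 2 ∂μ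
      = ∫ v, ∑ i : Fin d, ∑ j : Fin d,
          (u i * u j) * (⟪gradient Φ v, Eu i⟫ * ⟪gradient Φ v, Eu j⟫) ∂μ := by
        exact integral_congr_ae (Eventually.of_forall fun v => expand _)
    _ = ∑ i : Fin d, ∑ j : Fin d, (u i * u j) * B i j := by
        rw [integral_finset_sum _ (fun i _ =>
          integrable_finset_sum _ (fun j _ => (hint i j).const_mul _))]
        exact Finset.sum_congr rfl fun i _ => by
          rw [integral_finset_sum _ (fun j _ => (hint i j).const_mul _)]
          exact Finset.sum_congr rfl fun j _ => integral_const_mul _ _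
    _ = ∑ i : Fin d, (u i * u i) * (I / d) := by
        refine Finset.sum_congr rfl fun i _ => ?_
        have hz : ∀ j ∈ Finset.univ, j ≠ i → u i * u j * B i j = 0 := fun j _ hj => by
          rw [hoff i j (Ne.symm hj), mul_zero]
        rw [Finset.sum_eq_single_of_mem i (Finset.mem_univ i) hz, hdiag i]
    _ = (I / d) * ‖u‖ ^ 2 := by
        have hn : ‖u‖ ^ 2 = ∑ i : Fin d, u i * u i := by
          rw [EuclideanSpace.norm_eq, Real.sq_sqrt (by positivity)]
          exact Finset.sum_congr rfl fun i _ => by rw [Real.norm_eq_abs, sq_abs, sq]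
        rw [hn, Finset.mul_sum]
        exact Finset.sum_congr rfl fun i _ => by ring


/-- Macroscopic coercivity for the kinetic transport operator: if `μ₁` satisfies a
Poincaré inequality with constant `c₁`, then for every bounded `C¹` function `g` with
`∫ g dμ₁ = 0`,
`∫ g² dμ₁ ≤ (c₁ d / ∫ |∇Φ|² dμ₂) ∫∫ ⟨∇Φ(v), ∇g(x)⟩² μ₂(dv) μ₁(dx)`. -/
theorem statement6
    (d : ℕ) (hd : 0 < d)
    (ψ : ℝ → ℝ) (hψ : ContDiffOn ℝ 1 ψ (Ici 0)) (hψ0 : ∀ r ∈ Ici (0 : ℝ), 0 ≤ ψ r)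
    (Φ : E d → ℝ) (hΦdef : ∀ v, Φ v = ψ (‖v‖ ^ 2))
    (hCΦ : Integrable fun v : E d => Real.exp (-(Φ v)))
    (hΦmom : Integrable (fun v : E d => ‖gradient Φ v‖ ^ 2) (mu2 d Φ))
    (hΦpos : 0 < ∫ v, ‖gradient Φ v‖ ^ 2 ∂(mu2 d Φ))
    (U : E d → ℝ) (hUm : Measurable U) (hU0 : ∀ x, 0 ≤ U x)
    (hCU : Integrable fun x : E d => Real.exp (-(U x)))
    (c₁ : ℝ) (hc₁ : 0 < c₁)
    (hPoin : ∀ h : E d → ℝ, ContDiff ℝ 1 h → (∃ M, ∀ x, |h x| + ‖gradient h x‖ ≤ M) →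
      (∫ x, h x ^ 2 ∂(mu1 d U)) - (∫ x, h x ∂(mu1 d U)) ^ 2
        ≤ c₁ * ∫ x, ‖gradient h x‖ ^ 2 ∂(mu1 d U)) :
    ∀ g : E d → ℝ, ContDiff ℝ 1 g → (∃ M, ∀ x, |g x| + ‖gradient g x‖ ≤ M) →
      (∫ x, g x ∂(mu1 d U)) = 0 →
      ∫ x, g x ^ 2 ∂(mu1 d U)
        ≤ (c₁ * d / ∫ v, ‖gradient Φ v‖ ^ 2 ∂(mu2 d Φ))
            * ∫ x, (∫ v, ⟪gradient Φ v, gradient g x⟫ ^ 2 ∂(mu2 d Φ)) ∂(mu1 d U) := by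
  intro g hg hgb hgmean
  set I := ∫ v, ‖gradient Φ v‖ ^ 2 ∂(mu2 d Φ) with hIdef
  set J := ∫ x, ‖gradient g x‖ ^ 2 ∂(mu1 d U) with hJdef
  have hpoin := hPoin g hg hgb
  rw [hgmean] at hpoin
  simp only [ne_eq, OfNat.ofNat_ne_zero, not_false_eq_true, zero_pow, sub_zero] at hpoin
  have hkey : ∀ x : E d, ∫ v, ⟪gradient Φ v, gradient g x⟫ ^ 2 ∂(mu2 d Φ)
      = (I / d) * ‖gradient g x‖ ^ 2 := fun x =>
    key hd ψ hψ Φ hΦdef hΦmom (gradient g x)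
  have hinner : ∫ x, (∫ v, ⟪gradient Φ v, gradient g x⟫ ^ 2 ∂(mu2 d Φ)) ∂(mu1 d U)
      = (I / d) * J := by
    rw [hJdef, ← integral_const_mul]
    exact integral_congr_ae (Eventually.of_forall fun x => hkey x)
  rw [hinner]
  have hI0 : I ≠ 0 := ne_of_gt hΦpos
  have hd0 : (d : ℝ) ≠ 0 := Nat.cast_ne_zero.mpr hd.ne'
  have : c₁ * d / I * (I / d * J) = c₁ * J := by
    field_simp
  rw [this]
  exact hpoin
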